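/- In the winner-bid auction with tie-breaker favoring the high-valuation agent, for any bid b_l > c_l = v_l/2, the pure strategy b_l of the low-valuation agent is weakly dominated by the bid c_l: against every pure strategy of the high-valuation agent, bidding c_l yields at least as high a payoff as bidding b_l, and strictly higher against some pure strategy. -/
import Mathlib


open Finset Filter

/-- Payoff to the low-valuation agent in the winner-bid auction when she bids `b`
and the high-valuation agent bids `r` (ties won by the high-valuation agent). -/
noncomputable def UlWB (vl : ℕ) (b r : ℕ) : ℝ := if r < b then (vl : ℝ) - b else (r : ℝ)

/-- Payoff to the high-valuation agent in the winner-bid auction when she bids `b`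
and the low-valuation agent bids `r` (ties won by the high-valuation agent). -/
noncomputable def UhWB (vh : ℕ) (b r : ℕ) : ℝ := if r ≤ b then (vh : ℝ) - b else (r : ℝ)

/-- A mixed strategy on the bid set `{0, ..., pbar}`. -/
def IsMixed (pbar : ℕ) (σ : ℕ → ℝ) : Prop :=
  (∀ b, 0 ≤ σ b) ∧ (∀ b, pbar < b → σ b = 0) ∧ ∑ b ∈ Finset.range (pbar + 1), σ b = 1

/-- Expected payoff for the low-valuation agent of bidding `b` against `σh`. -/
noncomputable def eUl (pbar vl : ℕ) (σh : ℕ → ℝ) (b : ℕ) : ℝ :=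
  ∑ r ∈ Finset.range (pbar + 1), σh r * UlWB vl b r

/-- Expected payoff for the high-valuation agent of bidding `b` against `σl`. -/
noncomputable def eUh (pbar vh : ℕ) (σl : ℕ → ℝ) (b : ℕ) : ℝ :=
  ∑ r ∈ Finset.range (pbar + 1), σl r * UhWB vh b r

/-- Nash equilibrium of the winner-bid auction. -/
def IsNashWB (pbar vl vh : ℕ) (σl σh : ℕ → ℝ) : Prop :=
  IsMixed pbar σl ∧ IsMixed pbar σh ∧
  (∀ b ≤ pbar, 0 < σl b → ∀ b' ≤ pbar, eUl pbar vl σh b' ≤ eUl pbar vl σh b) ∧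
  (∀ b ≤ pbar, 0 < σh b → ∀ b' ≤ pbar, eUh pbar vh σl b' ≤ eUh pbar vh σl b)

/-- Expected payoff of the low-valuation agent at a mixed profile. -/
noncomputable def piL (pbar vl : ℕ) (σl σh : ℕ → ℝ) : ℝ :=
  ∑ b ∈ Finset.range (pbar + 1), σl b * eUl pbar vl σh b

/-- Expected payoff of the high-valuation agent at a mixed profile. -/
noncomputable def piH (pbar vh : ℕ) (σl σh : ℕ → ℝ) : ℝ :=
  ∑ b ∈ Finset.range (pbar + 1), σh b * eUh pbar vh σl b

/-- Weak payoff monotonicity for the low-valuation agent. -/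
def WPMl (pbar vl : ℕ) (σl σh : ℕ → ℝ) : Prop :=
  ∀ a ≤ pbar, ∀ b ≤ pbar, σl b < σl a → eUl pbar vl σh b < eUl pbar vl σh a

/-- Weak payoff monotonicity for the high-valuation agent. -/
def WPMh (pbar vh : ℕ) (σl σh : ℕ → ℝ) : Prop :=
  ∀ a ≤ pbar, ∀ b ≤ pbar, σh b < σh a → eUh pbar vh σl b < eUh pbar vh σl a

/-- Expected bid under a mixed strategy. -/
noncomputable def Ebid (pbar : ℕ) (σ : ℕ → ℝ) : ℝ :=
  ∑ b ∈ Finset.range (pbar + 1), σ b * b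

/-- In the winner-bid auction, any bid `bl > cl` of the low-valuation agent is weakly
dominated by the bid `cl`: bidding `cl` does at least as well against every bid of the
high-valuation agent, and strictly better against some bid. -/
theorem stmt6 (pbar vl vh cl ch : ℕ) (hvl : vl = 2 * cl) (hvh : vh = 2 * ch)
    (hcl : 0 < cl) (hclch : cl < ch) (hpbar : ch ≤ pbar)
    (bl : ℕ) (hbl1 : cl < bl) (hbl2 : bl ≤ pbar) :
    (∀ r ≤ pbar, UlWB vl bl r ≤ UlWB vl cl r) ∧
    (∃ r ≤ pbar, UlWB vl bl r < UlWB vl cl r) := by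
  constructor
  · intro r _
    unfold UlWB
    by_cases h1 : r < cl
    · rw [if_pos (h1.trans hbl1), if_pos h1]
      have : (cl : ℝ) ≤ bl := by exact_mod_cast hbl1.le
      linarith
    · rw [if_neg h1]
      by_cases h2 : r < bl
      · rw [if_pos h2]
        push_neg at h1
        have h3 : (cl : ℝ) ≤ r := by exact_mod_cast h1
        have h4 : (cl : ℝ) < bl := by exact_mod_cast hbl1
        subst hvl; push_cast; linarith
      · rw [if_neg h2]
  · refine ⟨cl, le_trans hclch.le hpbar, ?_⟩
    unfold UlWB
    rw [if_pos hbl1, if_neg (lt_irrefl cl)]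
    have h4 : (cl : ℝ) < bl := by exact_mod_cast hbl1
    subst hvl; push_cast; linarith
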